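/- Let H be a graph containing a clique K on ℓ vertices, ℓ ≥ 6, and let G be the bipartite graph constructed from H as in the reduction. Then the set X = {a_u, b_u : u ∈ V(K)} ∪ {a_u : u ∈ V(H) ∖ V(K)} ∪ {a_e : e ∈ E(H) ∖ E(K)} has size |V(H)| + |E(H)| - C(ℓ,2) + ℓ and covers exactly ‖G‖ - C(ℓ,2) edges of G. -/

import Mathlib

def redGraph {V : Type*} (H : SimpleGraph V) : SimpleGraph ((V ⊕ Sym2 V) × Bool) where
  Adj p q := p.2 ≠ q.2 ∧
    ((p.1 = q.1 ∧ ∀ e : Sym2 V, p.1 = Sum.inr e → e ∈ H.edgeSet) ∨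
      ∃ (v : V) (e : Sym2 V), e ∈ H.edgeSet ∧ v ∈ e ∧
        ((p.1 = Sum.inl v ∧ q.1 = Sum.inr e) ∨ (q.1 = Sum.inl v ∧ p.1 = Sum.inr e)))
  symm := by
    constructor
    rintro p q ⟨hne, h⟩
    refine ⟨hne.symm, ?_⟩
    rcases h with ⟨h1, h2⟩ | ⟨v, e, he, hv, h⟩
    · exact Or.inl ⟨h1.symm, by rw [← h1]; exact h2⟩
    · exact Or.inr ⟨v, e, he, hv, h.symm⟩
  loopless := by constructor; rintro p ⟨h, -⟩; exact h rfl

theorem stmt_19 {V : Type*} [Fintype V] (H : SimpleGraph V) (ℓ : ℕ) (hℓ : 6 ≤ ℓ)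
    (K : Finset V) (hK : K.card = ℓ)
    (hclique : ∀ u ∈ K, ∀ v ∈ K, u ≠ v → H.Adj u v)
    (X : Set ((V ⊕ Sym2 V) × Bool))
    (hX : X = {p | ∃ u ∈ K, p = ((Sum.inl u : V ⊕ Sym2 V), false) ∨
                    p = ((Sum.inl u : V ⊕ Sym2 V), true)}
          ∪ {p | ∃ u : V, u ∉ K ∧ p = ((Sum.inl u : V ⊕ Sym2 V), false)}
          ∪ {p | ∃ e ∈ H.edgeSet, ¬(∀ v ∈ e, v ∈ K) ∧
                    p = ((Sum.inr e : V ⊕ Sym2 V), false)}) :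
    X.ncard + ℓ.choose 2 = Fintype.card V + H.edgeSet.ncard + ℓ ∧
    {ed ∈ (redGraph H).edgeSet | ∃ p ∈ X, p ∈ ed}.ncard + ℓ.choose 2
      = (redGraph H).edgeSet.ncard := by
  classical
  -- the clique edges as a finset
  set eK : Finset (Sym2 V) := K.sym2.filter (fun e => ¬ e.IsDiag) with heK
  have heKmem : ∀ e : Sym2 V, e ∈ eK ↔ e ∈ H.edgeSet ∧ ∀ v ∈ e, v ∈ K := by
    intro e
    induction e with
    | _ u v =>
      simp only [heK, Finset.mem_filter, Finset.mk_mem_sym2_iff, Sym2.isDiag_iff_proj_eq]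
      constructor
      · rintro ⟨⟨hu, hv⟩, hne⟩
        refine ⟨(H.mem_edgeSet).2 (hclique u hu v hv hne), ?_⟩
        intro w hw; rcases Sym2.mem_iff.1 hw with rfl | rfl <;> assumption
      · rintro ⟨he, hall⟩
        exact ⟨⟨hall u (Sym2.mem_mk_left u v), hall v (Sym2.mem_mk_right u v)⟩,
          fun h => ((H.mem_edgeSet).1 he).ne h⟩
  have hcard_eK : eK.card = ℓ.choose 2 := by
    have h1 : K.sym2.filter (fun e => e.IsDiag) = K.image Sym2.diag := by
      ext e
      simp only [Finset.mem_filter, Finset.mem_image, Finset.mem_sym2_iff]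
      constructor
      · rintro ⟨hmem, hd⟩
        obtain ⟨a, rfl⟩ : ∃ a, Sym2.diag a = e := ⟨e.diagElem hd, Sym2.diag_diagElem hd⟩
        exact ⟨a, hmem a (by simp [Sym2.diag]), rfl⟩
      · rintro ⟨a, ha, rfl⟩
        refine ⟨fun w hw => ?_, Sym2.diag_isDiag a⟩
        simp only [Sym2.diag] at hw
        rcases Sym2.mem_iff.1 hw with rfl | rfl <;> exact ha
    have h2 : (K.sym2.filter (fun e => e.IsDiag)).card = ℓ := by
      rw [h1, Finset.card_image_of_injective _ Sym2.diag_injective, hK]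
    have h3 : (K.sym2.filter (fun e => e.IsDiag)).card + eK.card = K.sym2.card :=
      Finset.card_filter_add_card_filter_not (p := fun e : Sym2 V => e.IsDiag)
    have h4 : K.sym2.card = (ℓ+1).choose 2 := by rw [Finset.card_sym2, hK]
    have h5 : (ℓ+1).choose 2 = ℓ + ℓ.choose 2 := by
      rw [Nat.choose_succ_succ, Nat.choose_one_right]
    omega
  -- membership helpers for X
  have haX : ∀ v : V, ((Sum.inl v : V ⊕ Sym2 V), false) ∈ X := by
    intro v
    rw [hX]
    by_cases hv : v ∈ K
    · exact Or.inl (Or.inl ⟨v, hv, Or.inl rfl⟩)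
    · exact Or.inl (Or.inr ⟨v, hv, rfl⟩)
  have hbK : ∀ v ∈ K, ((Sum.inl v : V ⊕ Sym2 V), true) ∈ X := fun v hv => by
    rw [hX]; exact Or.inl (Or.inl ⟨v, hv, Or.inr rfl⟩)
  have haE : ∀ e ∈ H.edgeSet, ¬(∀ v ∈ e, v ∈ K) →
      ((Sum.inr e : V ⊕ Sym2 V), false) ∈ X := by
    intro e he hcond; rw [hX]; exact Or.inr ⟨e, he, hcond, rfl⟩
  have hbE : ∀ e : Sym2 V, ((Sum.inr e : V ⊕ Sym2 V), true) ∉ X := by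
    intro e hmem
    rw [hX] at hmem
    rcases hmem with (⟨u, _, h | h⟩ | ⟨u, _, h⟩) | ⟨e', _, _, h⟩ <;> simp_all
  have haK : ∀ e ∈ eK, ((Sum.inr e : V ⊕ Sym2 V), false) ∉ X := by
    intro e he hmem
    rw [hX] at hmem
    rcases hmem with (⟨u, _, h | h⟩ | ⟨u, _, h⟩) | ⟨e', he', hcond, h⟩
    · simp at h
    · simp at h
    · simp at h
    · simp only [Prod.mk.injEq, Sum.inr.injEq] at h
      exact hcond (h.1 ▸ ((heKmem e).1 he).2)
  constructor
  · -- size of X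
    have hfinE : H.edgeSet.Finite := Set.toFinite _
    set FE := hfinE.toFinset with hFE
    have heKsub : eK ⊆ FE := fun e he => hfinE.mem_toFinset.2 ((heKmem e).1 he).1
    set FA : Finset ((V ⊕ Sym2 V) × Bool) :=
      (K ×ˢ (Finset.univ : Finset Bool)).image
        (fun ub => ((Sum.inl ub.1 : V ⊕ Sym2 V), ub.2)) with hFA
    set FB : Finset ((V ⊕ Sym2 V) × Bool) :=
      Kᶜ.image (fun u => ((Sum.inl u : V ⊕ Sym2 V), false)) with hFB
    set FC : Finset ((V ⊕ Sym2 V) × Bool) :=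
      (FE \ eK).image (fun e => ((Sum.inr e : V ⊕ Sym2 V), false)) with hFC
    have hXF : X = ↑(FA ∪ FB ∪ FC) := by
      rw [hX]; ext p
      simp only [Finset.coe_union, Set.mem_union, Set.mem_setOf_eq, Finset.mem_coe,
        hFA, hFB, hFC, Finset.mem_image, Finset.mem_product, Finset.mem_univ, and_true,
        Finset.mem_compl, Finset.mem_sdiff, hfinE.mem_toFinset, Prod.exists]
      constructor
      · rintro ((⟨u, hu, rfl | rfl⟩ | ⟨u, hu, rfl⟩) | ⟨e, he, hcond, rfl⟩)
        · exact Or.inl (Or.inl ⟨u, false, hu, rfl⟩)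
        · exact Or.inl (Or.inl ⟨u, true, hu, rfl⟩)
        · exact Or.inl (Or.inr ⟨u, hu, rfl⟩)
        · exact Or.inr ⟨e, ⟨hfinE.mem_toFinset.2 he, fun hek => hcond ((heKmem e).1 hek).2⟩, rfl⟩
      · rintro ((⟨u, b, hu, rfl⟩ | ⟨u, hu, rfl⟩) | ⟨e, ⟨he, hek⟩, rfl⟩)
        · cases b
          · exact Or.inl (Or.inl ⟨u, hu, Or.inl rfl⟩)
          · exact Or.inl (Or.inl ⟨u, hu, Or.inr rfl⟩)
        · exact Or.inl (Or.inr ⟨u, hu, rfl⟩)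
        · exact Or.inr ⟨e, hfinE.mem_toFinset.1 he, fun hall => hek ((heKmem e).2 ⟨hfinE.mem_toFinset.1 he, hall⟩), rfl⟩
    have hinjA : Function.Injective
        (fun ub : V × Bool => ((Sum.inl ub.1 : V ⊕ Sym2 V), ub.2)) := by
      rintro ⟨u, b⟩ ⟨u', b'⟩ h
      simp only [Prod.mk.injEq, Sum.inl.injEq] at h
      simp [h.1, h.2]
    have hinjB : Function.Injective (fun u : V => ((Sum.inl u : V ⊕ Sym2 V), false)) := by
      intro u u' h
      simpa using h
    have hinjC : Function.Injective
        (fun e : Sym2 V => ((Sum.inr e : V ⊕ Sym2 V), false)) := by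
      intro e e' h
      simpa using h
    have hFAcard : FA.card = 2 * ℓ := by
      rw [hFA, Finset.card_image_of_injective _ hinjA, Finset.card_product,
        Finset.card_univ, Fintype.card_bool, hK, Nat.mul_comm]
    have hFBcard : FB.card = Kᶜ.card := by
      rw [hFB, Finset.card_image_of_injective _ hinjB]
    have hFCcard : FC.card + eK.card = FE.card := by
      rw [hFC, Finset.card_image_of_injective _ hinjC,
        Finset.card_sdiff_add_card_eq_card heKsub]
    have hdisAB : Disjoint FA FB := by
      rw [Finset.disjoint_left]
      rintro p hp hp'
      simp only [hFA, hFB, Finset.mem_image, Finset.mem_product, Finset.mem_univ, and_true,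
        Finset.mem_compl, Prod.exists] at hp hp'
      obtain ⟨u, b, hu, rfl⟩ := hp
      obtain ⟨u', hu', h⟩ := hp'
      simp only [Prod.mk.injEq, Sum.inl.injEq] at h
      exact hu' (h.1 ▸ hu)
    have hdisC : Disjoint (FA ∪ FB) FC := by
      rw [Finset.disjoint_left]
      rintro p hp hp'
      simp only [hFA, hFB, hFC, Finset.mem_union, Finset.mem_image, Finset.mem_product,
        Finset.mem_univ, and_true, Prod.exists] at hp hp'
      obtain ⟨e, -, h⟩ := hp'
      rcases hp with ⟨u, b, -, rfl⟩ | ⟨u, -, rfl⟩ <;> simp at h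
    have hXcard : X.ncard = FA.card + FB.card + FC.card := by
      rw [hXF, Set.ncard_coe_finset, Finset.card_union_of_disjoint hdisC,
        Finset.card_union_of_disjoint hdisAB]
    have hEcard : H.edgeSet.ncard = FE.card := Set.ncard_eq_toFinset_card _ hfinE
    have hVcard : K.card + Kᶜ.card = Fintype.card V := Finset.card_add_card_compl K
    omega
  · -- covered edges
    set f : Sym2 V → Sym2 ((V ⊕ Sym2 V) × Bool) :=
      fun e => s(((Sum.inr e : V ⊕ Sym2 V), false), ((Sum.inr e : V ⊕ Sym2 V), true)) with hf
    have hfinj : Function.Injective f := by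
      intro e e' h
      simp only [hf, Sym2.eq_iff, Prod.mk.injEq, Sum.inr.injEq] at h
      tauto
    have hSu : {ed ∈ (redGraph H).edgeSet | ¬ ∃ p ∈ X, p ∈ ed} = f '' ↑eK := by
      ext ed
      simp only [Set.mem_setOf_eq, Set.mem_image, Finset.mem_coe]
      constructor
      · rintro ⟨hed, hnc⟩
        have hcov : ∀ p ∈ ed, p ∉ X := fun p hp hpX => hnc ⟨p, hpX, hp⟩
        clear hnc
        revert hed hcov
        induction ed with
        | _ p q =>
          obtain ⟨x, b⟩ := p
          obtain ⟨y, c⟩ := q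
          intro hed hcov
          rw [SimpleGraph.mem_edgeSet] at hed
          obtain ⟨hne, hor⟩ := hed
          dsimp only at hne
          have hmf : ∀ z : V ⊕ Sym2 V, x = z → (z, b) ∈ s(((x : V ⊕ Sym2 V), b), (y, c)) := by
            rintro z rfl; exact Sym2.mem_mk_left _ _
          have hmg : ∀ z : V ⊕ Sym2 V, y = z → (z, c) ∈ s(((x : V ⊕ Sym2 V), b), (y, c)) := by
            rintro z rfl; exact Sym2.mem_mk_right _ _
          rcases hor with ⟨h1, h2⟩ | ⟨v, e, he, hv, ⟨hp1, hq1⟩ | ⟨hq1, hp1⟩⟩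
          · dsimp only at h1 h2
            subst h1
            rcases hx : x with v | e
            · exfalso
              cases b
              · exact hcov _ (hmf _ hx) (haX v)
              · cases c
                · exact hcov _ (hmg _ hx) (haX v)
                · exact hne rfl
            · have he : e ∈ H.edgeSet := h2 e hx
              have hallK : ∀ w ∈ e, w ∈ K := by
                by_contra hcond
                cases b
                · exact hcov _ (hmf _ hx) (haE e he hcond)
                · cases c
                  · exact hcov _ (hmg _ hx) (haE e he hcond)
                  · exact hne rfl
              refine ⟨e, (heKmem e).2 ⟨he, hallK⟩, ?_⟩
              subst hx
              cases b <;> cases c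
              · exact absurd rfl hne
              · rfl
              · exact Sym2.eq_swap
              · exact absurd rfl hne
          · -- x = inl v, y = inr e
            dsimp only at hp1 hq1
            exfalso
            cases b
            · exact hcov _ (hmf _ hp1) (haX v)
            · cases c
              · by_cases hall : ∀ w ∈ e, w ∈ K
                · exact hcov _ (hmf _ hp1) (hbK v (hall v hv))
                · exact hcov _ (hmg _ hq1) (haE e he hall)
              · exact hne rfl
          · -- y = inl v, x = inr e
            dsimp only at hp1 hq1
            exfalso
            cases c
            · exact hcov _ (hmg _ hq1) (haX v)
            · cases b
              · by_cases hall : ∀ w ∈ e, w ∈ K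
                · exact hcov _ (hmg _ hq1) (hbK v (hall v hv))
                · exact hcov _ (hmf _ hp1) (haE e he hall)
              · exact hne rfl
      · rintro ⟨e, hek, rfl⟩
        have he : e ∈ H.edgeSet := ((heKmem e).1 hek).1
        refine ⟨?_, ?_⟩
        · rw [hf, SimpleGraph.mem_edgeSet]
          exact ⟨by simp, Or.inl ⟨rfl, fun e' h => by
            obtain rfl := Sum.inr.inj h; exact he⟩⟩
        · rintro ⟨p, hpX, hped⟩
          rw [hf] at hped
          rcases Sym2.mem_iff.1 hped with rfl | rfl
          · exact haK e hek hpX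
          · exact hbE e hpX
    have hun : {ed ∈ (redGraph H).edgeSet | ∃ p ∈ X, p ∈ ed}
        ∪ {ed ∈ (redGraph H).edgeSet | ¬ ∃ p ∈ X, p ∈ ed} = (redGraph H).edgeSet := by
      ext ed
      simp only [Set.mem_union, Set.mem_setOf_eq]
      constructor
      · rintro (⟨h, -⟩ | ⟨h, -⟩) <;> exact h
      · intro h
        by_cases hc : ∃ p ∈ X, p ∈ ed
        · exact Or.inl ⟨h, hc⟩
        · exact Or.inr ⟨h, hc⟩
    have hdis : Disjoint {ed ∈ (redGraph H).edgeSet | ∃ p ∈ X, p ∈ ed}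
        {ed ∈ (redGraph H).edgeSet | ¬ ∃ p ∈ X, p ∈ ed} := by
      rw [Set.disjoint_left]
      rintro ed ⟨-, h⟩ ⟨-, h'⟩
      exact h' h
    have hsum := Set.ncard_union_eq hdis (Set.toFinite _) (Set.toFinite _)
    rw [hun] at hsum
    have huncov : {ed ∈ (redGraph H).edgeSet | ¬ ∃ p ∈ X, p ∈ ed}.ncard = ℓ.choose 2 := by
      rw [hSu, Set.ncard_image_of_injective _ hfinj, Set.ncard_coe_finset, hcard_eK]
    omega
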